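/- Let (H, Γ) be a global solution on ℝ of H' = f₁(H, Γ), Γ' = f₂(H, Γ) with (H, Γ)(ξ) ∈ (H*, 2H*) × (0, 1) for all ξ ∈ ℝ. Then Γ' ≤ −Γϱ(Γ)/(2H* + 4DR_ϱ) ≤ 0 on ℝ, Γ(ξ) converges as ξ → −∞ to some Γ_α with ϱ(Γ_α) = 0, and hence Γ(ξ) → 1 as ξ → −∞. -/

import Mathlib

open Set

private lemma stmt_18_alg (D Hstar Rϱ a h r : ℝ)
    (hD : 0 < D) (hHstar : 0 < Hstar) (hRϱpos : 0 < Rϱ)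
    (ha0 : 0 < a) (ha1 : a < 1) (hh1 : Hstar < h) (hh2 : h < 2 * Hstar)
    (hr0 : 0 < r) (hr1 : r ≤ Rϱ) :
    2 * a * (h - 3 * Hstar) * r / (h * (a * h + 4 * D * r))
      ≤ -(a * r) / (2 * Hstar + 4 * D * Rϱ) := by
  have hhpos : 0 < h := lt_trans hHstar hh1
  have hden : 0 < h * (a * h + 4 * D * r) := by positivity
  have hP : 0 < 2 * Hstar + 4 * D * Rϱ := by positivity
  rw [div_le_div_iff₀ hden hP]
  have hah : a * h ≤ h := by nlinarith
  have hsum : a * h + 4 * D * r ≤ 2 * Hstar + 4 * D * Rϱ := by nlinarith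
  have key : 2 * (h - 3 * Hstar) * (2 * Hstar + 4 * D * Rϱ) + h * (a * h + 4 * D * r) ≤ 0 := by
    have h1 : h * (a * h + 4 * D * r) ≤ (2 * Hstar) * (2 * Hstar + 4 * D * Rϱ) :=
      mul_le_mul hh2.le hsum (by positivity) (by positivity)
    nlinarith
  nlinarith [mul_nonpos_of_nonneg_of_nonpos (mul_nonneg ha0.le hr0.le) key]

/-- Along a global trajectory of the gravity–diffusion system staying in the
open rectangle, Γ is nonincreasing with a quantitative bound and Γ → 1 as
ξ → −∞. -/
theorem stmt_18 (G D Hstar Rϱ : ℝ)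
    (hG : 0 < G) (hD : 0 < D) (hHstar : 0 < Hstar)
    (ϱ : ℝ → ℝ) (hϱcont : ContinuousOn ϱ (Icc (0:ℝ) 1))
    (hϱpos : ∀ z ∈ Ico (0:ℝ) 1, 0 < ϱ z) (hϱ1 : ϱ 1 = 0)
    (hRϱ : ∀ z ∈ Icc (0:ℝ) 1, ϱ z ≤ Rϱ) (hRϱpos : 0 < Rϱ)
    (H Γ : ℝ → ℝ)
    (hHrange : ∀ ξ : ℝ, H ξ ∈ Ioo Hstar (2 * Hstar))
    (hΓrange : ∀ ξ : ℝ, Γ ξ ∈ Ioo (0:ℝ) 1)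
    (hHd : ∀ ξ : ℝ,
      HasDerivAt H ((6 * Γ ξ * H ξ * (2 * Hstar - H ξ)
          - 12 * D * (H ξ - Hstar) * ϱ (Γ ξ))
        / (G * (H ξ)^3 * (Γ ξ * H ξ + 4 * D * ϱ (Γ ξ)))) ξ)
    (hΓd : ∀ ξ : ℝ,
      HasDerivAt Γ (2 * Γ ξ * (H ξ - 3 * Hstar) * ϱ (Γ ξ)
        / (H ξ * (Γ ξ * H ξ + 4 * D * ϱ (Γ ξ)))) ξ) :
    (∀ ξ : ℝ, deriv Γ ξ ≤ -(Γ ξ * ϱ (Γ ξ)) / (2 * Hstar + 4 * D * Rϱ) ∧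
        deriv Γ ξ ≤ 0) ∧
      (∃ Γα : ℝ, Filter.Tendsto Γ Filter.atBot (nhds Γα) ∧ ϱ Γα = 0) ∧
      Filter.Tendsto Γ Filter.atBot (nhds 1) := by
  have hP : 0 < 2 * Hstar + 4 * D * Rϱ := by positivity
  -- basic facts at each ξ
  have hr : ∀ ξ : ℝ, 0 < ϱ (Γ ξ) :=
    fun ξ => hϱpos _ ⟨(hΓrange ξ).1.le, (hΓrange ξ).2⟩
  have hrR : ∀ ξ : ℝ, ϱ (Γ ξ) ≤ Rϱ :=
    fun ξ => hRϱ _ ⟨(hΓrange ξ).1.le, (hΓrange ξ).2.le⟩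
  have hbound : ∀ ξ : ℝ, deriv Γ ξ ≤ -(Γ ξ * ϱ (Γ ξ)) / (2 * Hstar + 4 * D * Rϱ) := by
    intro ξ
    rw [(hΓd ξ).deriv]
    exact stmt_18_alg D Hstar Rϱ (Γ ξ) (H ξ) (ϱ (Γ ξ)) hD hHstar hRϱpos
      (hΓrange ξ).1 (hΓrange ξ).2 (hHrange ξ).1 (hHrange ξ).2 (hr ξ) (hrR ξ)
  have hnonpos : ∀ ξ : ℝ, deriv Γ ξ ≤ 0 := by
    intro ξ
    refine (hbound ξ).trans ?_
    have : 0 ≤ Γ ξ * ϱ (Γ ξ) := mul_nonneg (hΓrange ξ).1.le (hr ξ).le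
    exact div_nonpos_of_nonpos_of_nonneg (neg_nonpos.2 this) hP.le
  have hanti : Antitone Γ :=
    antitone_of_deriv_nonpos (fun ξ => (hΓd ξ).differentiableAt) hnonpos
  have hbdd : BddAbove (range Γ) := ⟨1, by rintro _ ⟨ξ, rfl⟩; exact (hΓrange ξ).2.le⟩
  set Γα : ℝ := ⨆ ξ, Γ ξ with hΓα
  have htend : Filter.Tendsto Γ Filter.atBot (nhds Γα) := tendsto_atBot_ciSup hanti hbdd
  have hle : ∀ ξ, Γ ξ ≤ Γα := fun ξ => le_ciSup hbdd ξ
  have hΓα0 : 0 < Γα := lt_of_lt_of_le (hΓrange 0).1 (hle 0)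
  have hΓα1 : Γα ≤ 1 := ciSup_le fun ξ => (hΓrange ξ).2.le
  -- Γα = 1
  have hΓαeq : Γα = 1 := by
    by_contra hne
    have hΓαlt : Γα < 1 := lt_of_le_of_ne hΓα1 hne
    have hc : 0 < ϱ Γα := hϱpos _ ⟨hΓα0.le, hΓαlt⟩
    -- continuity at Γα
    have hcont : ContinuousAt ϱ Γα :=
      hϱcont.continuousAt (Icc_mem_nhds hΓα0 hΓαlt)
    have hev : ∀ᶠ z in nhds Γα, ϱ Γα / 2 < ϱ z :=
      hcont.eventually_const_lt (by linarith)
    -- eventually in ξ at atBot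
    have hev2 : ∀ᶠ ξ in Filter.atBot, ϱ Γα / 2 < ϱ (Γ ξ) ∧ Γα / 2 < Γ ξ := by
      filter_upwards [htend.eventually hev,
        htend.eventually (eventually_gt_nhds (by linarith : Γα / 2 < Γα))] with ξ h1 h2
      exact ⟨h1, h2⟩
    obtain ⟨T, hT⟩ := Filter.eventually_atBot.1 hev2
    set ε : ℝ := (Γα / 2) * (ϱ Γα / 2) / (2 * Hstar + 4 * D * Rϱ) with hε
    have hεpos : 0 < ε := by positivity
    -- on Iic T, deriv Γ ≤ -ε
    have hderiv_le : ∀ ξ ≤ T, deriv Γ ξ ≤ -ε := by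
      intro ξ hξ
      refine (hbound ξ).trans ?_
      rw [neg_div, neg_le_neg_iff, div_le_div_iff₀ hP hP]
      have h1 := (hT ξ hξ).1
      have h2 := (hT ξ hξ).2
      have := mul_le_mul h2.le h1.le (by positivity) (hΓrange ξ).1.le
      nlinarith
    -- g = Γ + ε * id is antitone on Iic T
    have hder : ∀ ξ : ℝ, HasDerivAt (fun x => Γ x + ε * x) (deriv Γ ξ + ε) ξ := by
      intro ξ
      have h1 : HasDerivAt Γ (deriv Γ ξ) ξ := (hΓd ξ).differentiableAt.hasDerivAt
      have h2 := h1.add ((hasDerivAt_id ξ).const_mul ε)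
      rw [mul_one] at h2
      exact h2
    have hg : AntitoneOn (fun x => Γ x + ε * x) (Iic T) := by
      refine antitoneOn_of_hasDerivWithinAt_nonpos (f' := fun ξ => deriv Γ ξ + ε)
        (convex_Iic T) ?_ (fun ξ _ => (hder ξ).hasDerivWithinAt) ?_
      · exact Continuous.continuousOn
          (continuous_iff_continuousAt.2 fun ξ => (hder ξ).continuousAt)
      · intro ξ hξ
        rw [interior_Iic] at hξ
        have := hderiv_le ξ (le_of_lt hξ)
        show deriv Γ ξ + ε ≤ 0
        linarith
    have hξle : T - 1 / ε ≤ T := by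
      have : 0 < 1 / ε := by positivity
      linarith
    have hgle : Γ T + ε * T ≤ Γ (T - 1 / ε) + ε * (T - 1 / ε) :=
      hg (mem_Iic.2 hξle) (mem_Iic.2 le_rfl) hξle
    have hcancel : ε * (1 / ε) = 1 := by field_simp
    have h1 : Γ (T - 1 / ε) < 1 := (hΓrange _).2
    have h2 : 0 < Γ T := (hΓrange T).1
    nlinarith
  refine ⟨fun ξ => ⟨hbound ξ, hnonpos ξ⟩, ⟨Γα, htend, by rw [hΓαeq]; exact hϱ1⟩, ?_⟩
  rwa [hΓαeq] at htend
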